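/- Let p be a prime, n > 0 an integer, and f ∈ ℤ_p[[X]]. Let Q = Σ_{i=1}^{p} C(p,i) X^{i-1} ∈ ℤ_p[[X]], so that X·Q = (1+X)^p - 1. Suppose x_0, x_1, ..., x_{p-1} ∈ ℤ_p[[X]] satisfy Q^n · f = Σ_{i=0}^{p-1} (1+X)^i · x_i((1+X)^p - 1). Then x_0 belongs to the ideal of ℤ_p[[X]] generated by the elements X^j · p^[(n(p-1)-jp-1)/(p-1)] for 0 ≤ j ≤ [n(p-1)/p]. -/

import Mathlib

open PowerSeries

/-- Substitution of a power series `g` with zero constant term into a power series `f`: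
the coefficient of `X^d` in `f(g)` is `∑_{n ≤ d} (coeff n f) · (coeff d g^n)`.
(When the constant term of `g` vanishes, `coeff d (g^n) = 0` for `n > d`, so this is
the usual substitution `f ↦ f(g)`.) -/
noncomputable def PowerSeries.subst' {R : Type*} [CommRing R] (g f : R⟦X⟧) : R⟦X⟧ :=
  PowerSeries.mk fun d => ∑ n ∈ Finset.range (d + 1), coeff n f * coeff d (g ^ n)

namespace SEII
variable {R : Type*} [CommRing R]

lemma coeff_subst' (g f : R⟦X⟧) (d : ℕ) :
    coeff d (subst' g f) = ∑ n ∈ Finset.range (d + 1), coeff n f * coeff d (g ^ n) :=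
  coeff_mk _ _

lemma subst'_add (g f₁ f₂ : R⟦X⟧) : subst' g (f₁ + f₂) = subst' g f₁ + subst' g f₂ := by
  ext d; simp [coeff_subst', Finset.sum_add_distrib, add_mul]

lemma subst'_C_mul (g : R⟦X⟧) (c : R) (f : R⟦X⟧) :
    subst' g (C c * f) = C c * subst' g f := by
  ext d; simp [coeff_subst', Finset.mul_sum, mul_assoc]

lemma subst'_zero (g : R⟦X⟧) : subst' g 0 = 0 := by
  ext d; simp [coeff_subst']

lemma subst'_sub (g f₁ f₂ : R⟦X⟧) : subst' g (f₁ - f₂) = subst' g f₁ - subst' g f₂ := by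
  ext d; simp [coeff_subst', Finset.sum_sub_distrib, sub_mul]

lemma subst'_sum {ι : Type*} (g : R⟦X⟧) (s : Finset ι) (f : ι → R⟦X⟧) :
    subst' g (∑ i ∈ s, f i) = ∑ i ∈ s, subst' g (f i) := by
  classical
  induction s using Finset.induction with
  | empty => simp [subst'_zero]
  | insert _ _ h ih => rw [Finset.sum_insert h, subst'_add, ih, Finset.sum_insert h]

lemma coeff_pow_eq_zero {g : R⟦X⟧} (hg : constantCoeff g = 0) {m d : ℕ} (h : d < m) :
    coeff d (g ^ m) = 0 :=
  X_pow_dvd_iff.mp (pow_dvd_pow_of_dvd (X_dvd_iff.mpr hg) m) d h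

lemma subst'_X_mul {g : R⟦X⟧} (hg : constantCoeff g = 0) (f : R⟦X⟧) :
    subst' g (X * f) = g * subst' g f := by
  ext d
  rw [coeff_subst', coeff_mul]
  have L : ∑ n ∈ Finset.range (d + 1), coeff n (X * f) * coeff d (g ^ n)
      = ∑ m ∈ Finset.range (d + 1), coeff m f * coeff d (g ^ (m + 1)) := by
    rw [Finset.sum_range_succ']
    simp only [coeff_succ_X_mul]
    have h0 : coeff 0 (X * f) * coeff d (g ^ 0) = 0 := by
      simp [coeff_zero_eq_constantCoeff]
    rw [h0, add_zero, Finset.sum_range_succ]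
    rw [coeff_pow_eq_zero hg (Nat.lt_succ_self d), mul_zero, add_zero]
  rw [L]
  have Rr : ∑ q ∈ Finset.HasAntidiagonal.antidiagonal d, coeff q.1 g * coeff q.2 (subst' g f)
      = ∑ m ∈ Finset.range (d + 1), coeff m f *
          (∑ q ∈ Finset.HasAntidiagonal.antidiagonal d, coeff q.1 g * coeff q.2 (g ^ m)) := by
    have step : ∀ q ∈ Finset.HasAntidiagonal.antidiagonal d,
        coeff q.1 g * coeff q.2 (subst' g f)
        = ∑ m ∈ Finset.range (d + 1), coeff m f * (coeff q.1 g * coeff q.2 (g ^ m)) := by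
      intro q hq
      rw [coeff_subst']
      have hq2 : q.2 ≤ d := by
        have := Finset.HasAntidiagonal.antidiagonal.snd_le hq; omega
      have ext : ∑ m ∈ Finset.range (q.2 + 1), coeff m f * coeff q.2 (g ^ m)
          = ∑ m ∈ Finset.range (d + 1), coeff m f * coeff q.2 (g ^ m) := by
        apply Finset.sum_subset
        · intro m hm; simp only [Finset.mem_range] at *; omega
        · intro m hm hm'; simp only [Finset.mem_range] at *
          rw [coeff_pow_eq_zero hg (by omega), mul_zero]
      rw [ext, Finset.mul_sum]
      congr 1; ext m; ring
    rw [Finset.sum_congr rfl step, Finset.sum_comm]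
    simp [Finset.mul_sum]
  rw [Rr]
  congr 1; ext m
  rw [← coeff_mul, ← pow_succ']

lemma C_dvd_iff {c : R} {f : R⟦X⟧} : C c ∣ f ↔ ∀ d, c ∣ coeff d f := by
  constructor
  · rintro ⟨w, rfl⟩ d
    rw [coeff_C_mul]; exact Dvd.intro _ rfl
  · intro h
    refine ⟨mk fun d => (h d).choose, ?_⟩
    ext d
    rw [coeff_C_mul, coeff_mk]
    exact (h d).choose_spec

lemma coeff_X_pow_mul'' (f : R⟦X⟧) (r k : ℕ) :
    coeff k (X ^ r * f) = if r ≤ k then coeff (k - r) f else 0 := by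
  split_ifs with h
  · conv_lhs => rw [show k = (k - r) + r by omega]
    exact coeff_X_pow_mul f r (k - r)
  · exact X_pow_dvd_iff.mp ⟨f, rfl⟩ k (by omega)

lemma one_add_X_pow (m : ℕ) : ((1 : R⟦X⟧) + X) ^ m
    = ∑ k ∈ Finset.range (m + 1), (m.choose k : R⟦X⟧) * X ^ k := by
  rw [add_comm, add_pow]
  simp [mul_comm]

section Main
variable (p : ℕ) [hp : Fact p.Prime]

local notation "A" => PowerSeries ℤ_[p]

noncomputable def phiX : A := (1 + X) ^ p - 1
noncomputable def QQ : A := ∑ i ∈ Finset.range p, (p.choose (i + 1) : A) * X ^ i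
noncomputable def sg (h : A) : A := subst' (phiX p) h
noncomputable def tg (h : A) : A := subst' ((X : A) ^ p) h
noncomputable def Th (D : ℕ → A) : A := ∑ r ∈ Finset.range p, X ^ r * sg p (D r)
noncomputable def Gg (g : A) (r : ℕ) : A := mk fun t => coeff (p * t + r) g

lemma hp0 : 0 < p := hp.out.pos
lemma hp2 : 2 ≤ p := hp.out.two_le

lemma pA_eq : (p : A) = C (p : ℤ_[p]) := (map_natCast C p).symm

lemma pA_ne : (p : A) ≠ 0 := by
  rw [pA_eq]
  intro h
  have := congrArg (constantCoeff) h
  simp only [constantCoeff_C, map_zero] at this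
  exact (Nat.cast_ne_zero (R := ℤ_[p])).mpr hp.out.ne_zero this

lemma constCoeff_phiX : constantCoeff (phiX p) = 0 := by
  simp [phiX]

lemma sg_add (f₁ f₂ : A) : sg p (f₁ + f₂) = sg p f₁ + sg p f₂ := subst'_add _ _ _
lemma sg_sub (f₁ f₂ : A) : sg p (f₁ - f₂) = sg p f₁ - sg p f₂ := subst'_sub _ _ _
lemma sg_zero : sg p 0 = 0 := subst'_zero _

lemma sg_nat_mul (c : ℕ) (f : A) : sg p ((c : A) * f) = (c : A) * sg p f := by
  rw [show ((c : A)) = C (c : ℤ_[p]) from (map_natCast C c).symm]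
  exact subst'_C_mul _ _ _

lemma sg_X_mul (f : A) : sg p (X * f) = phiX p * sg p f :=
  subst'_X_mul (constCoeff_phiX p) f

lemma X_mul_QQ : X * QQ p = phiX p := by
  rw [QQ, phiX, one_add_X_pow, Finset.sum_range_succ', Finset.mul_sum]
  simp only [Nat.choose_zero_right, Nat.cast_one, pow_zero, mul_one, one_mul]
  rw [add_sub_cancel_right]
  apply Finset.sum_congr rfl
  intro i _
  ring

lemma coeff_tg (h : A) (k : ℕ) :
    coeff k (tg p h) = if p ∣ k then coeff (k / p) h else 0 := by
  rw [tg, coeff_subst']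
  have term : ∀ n, coeff k (((X : A) ^ p) ^ n) = if k = p * n then 1 else 0 := by
    intro n; rw [← pow_mul, coeff_X_pow]
  split_ifs with hdvd
  · rw [Finset.sum_eq_single (k / p)]
    · rw [term, if_pos (Nat.mul_div_cancel' hdvd).symm, mul_one]
    · intro n _ hne
      rw [term, if_neg, mul_zero]
      intro hk
      exact hne (by rw [hk, Nat.mul_div_cancel_left _ (hp0 p)])
    · intro hk
      exact absurd (Finset.mem_range.mpr (Nat.lt_succ_of_le (Nat.div_le_self k p))) hk
  · apply Finset.sum_eq_zero
    intro n _
    rw [term, if_neg, mul_zero]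
    intro hk; exact hdvd ⟨n, hk⟩

lemma coeff_sum_tg (h : ℕ → A) (k : ℕ) :
    coeff k (∑ r ∈ Finset.range p, X ^ r * tg p (h r))
      = coeff (k / p) (h (k % p)) := by
  rw [map_sum]
  have hdm := Nat.div_add_mod k p
  rw [Finset.sum_eq_single (k % p)]
  · rw [coeff_X_pow_mul'', if_pos (Nat.mod_le k p), coeff_tg, if_pos]
    · congr 1
      have : k - k % p = p * (k / p) := by omega
      rw [this, Nat.mul_div_cancel_left _ (hp0 p)]
    · exact ⟨k / p, by omega⟩
  · intro r hr hne
    rw [coeff_X_pow_mul'']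
    split_ifs with hle
    · rw [coeff_tg]
      rw [if_neg, ]
      rintro ⟨m, hm⟩
      apply hne
      have hrp : r < p := Finset.mem_range.mp hr
      have : k % p = r := by
        rw [show k = p * m + r by omega, Nat.mul_add_mod, Nat.mod_eq_of_lt hrp]
      omega
    · rfl
  · intro hk
    exact absurd (Finset.mem_range.mpr (Nat.mod_lt k (hp0 p))) hk

lemma digits (g : A) : ∑ r ∈ Finset.range p, X ^ r * tg p (Gg p g r) = g := by
  ext k
  rw [coeff_sum_tg, Gg, coeff_mk, Nat.div_add_mod]

lemma phiX_eq : ∃ R₀ : A, phiX p = X ^ p + (p : A) * R₀ := by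
  refine ⟨∑ k ∈ Finset.Ico 1 p, ((p.choose k / p : ℕ) : A) * X ^ k, ?_⟩
  have hmul : (p : A) * ∑ k ∈ Finset.Ico 1 p, ((p.choose k / p : ℕ) : A) * X ^ k
      = ∑ k ∈ Finset.Ico 1 p, (p.choose k : A) * X ^ k := by
    rw [Finset.mul_sum]
    apply Finset.sum_congr rfl
    intro k hk
    rw [Finset.mem_Ico] at hk
    have hdvd : p ∣ p.choose k := hp.out.dvd_choose_self (by omega) hk.2
    rw [← mul_assoc, ← Nat.cast_mul, Nat.mul_div_cancel' hdvd]
  rw [hmul, phiX, one_add_X_pow, Finset.sum_range_succ]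
  rw [Finset.range_eq_Ico, Finset.sum_eq_sum_Ico_succ_bot (hp0 p)]
  simp only [Nat.choose_zero_right, Nat.cast_one, pow_zero, mul_one, Nat.choose_self]
  ring

lemma exists_S : ∀ m : ℕ, ∃ S : A, phiX p ^ m = X ^ (p * m) + (p : A) * S := by
  obtain ⟨R₀, hR⟩ := phiX_eq p
  intro m
  induction m with
  | zero => exact ⟨0, by simp⟩
  | succ m ih =>
    obtain ⟨S, hS⟩ := ih
    refine ⟨X ^ (p * m) * R₀ + S * X ^ p + (p : A) * (S * R₀), ?_⟩
    rw [pow_succ, hS, hR, show p * (m + 1) = p * m + p by ring, pow_add]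
    ring

lemma sg_sub_tg (h : A) : (p : A) ∣ sg p h - tg p h := by
  choose S hS using exists_S p
  rw [pA_eq, C_dvd_iff]
  intro d
  rw [map_sub, sg, tg, coeff_subst', coeff_subst', ← Finset.sum_sub_distrib]
  apply Finset.dvd_sum
  intro n _
  rw [← mul_sub]
  have key : coeff d (phiX p ^ n) - coeff d (((X : A) ^ p) ^ n)
      = (p : ℤ_[p]) * coeff d (S n) := by
    rw [← pow_mul, hS n, map_add, ← map_natCast C p, coeff_C_mul]
    ring
  rw [key]
  exact ⟨coeff n h * coeff d (S n), by ring⟩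

lemma Th_add (D E : ℕ → A) : Th p (fun r => D r + E r) = Th p D + Th p E := by
  rw [Th, Th, Th, ← Finset.sum_add_distrib]
  apply Finset.sum_congr rfl
  intro r _
  rw [sg_add, mul_add]

lemma Th_pmul (D : ℕ → A) : Th p (fun r => (p : A) * D r) = (p : A) * Th p D := by
  rw [Th, Th, Finset.mul_sum]
  apply Finset.sum_congr rfl
  intro r _
  rw [sg_nat_mul]
  ring

lemma surj : ∀ (a : ℕ) (g : A), ∃ D : ℕ → A,
    (∀ r, p ≤ r → D r = 0) ∧ (p : A) ^ a ∣ (g - Th p D) := by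
  intro a
  induction a with
  | zero => intro g; exact ⟨fun _ => 0, fun _ _ => rfl, by rw [pow_zero]; exact one_dvd _⟩
  | succ a ih =>
    intro g
    set G : ℕ → A := fun r => if r < p then Gg p g r else 0 with hG
    have h1 : (p : A) ∣ g - Th p G := by
      have hg : g = ∑ r ∈ Finset.range p, X ^ r * tg p (G r) := by
        rw [show ∑ r ∈ Finset.range p, X ^ r * tg p (G r)
            = ∑ r ∈ Finset.range p, X ^ r * tg p (Gg p g r) from
          Finset.sum_congr rfl fun r hr => by
            rw [hG]; simp [Finset.mem_range.mp hr]]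
        exact (digits p g).symm
      have key : g - Th p G
          = ∑ r ∈ Finset.range p, X ^ r * (tg p (G r) - sg p (G r)) := by
        conv_lhs => rw [hg, Th]
        rw [← Finset.sum_sub_distrib]
        exact Finset.sum_congr rfl fun r _ => (mul_sub _ _ _).symm
      rw [key]
      apply Finset.dvd_sum
      intro r _
      apply Dvd.dvd.mul_left _ _
      have h2 := sg_sub_tg p (G r)
      rw [show tg p (G r) - sg p (G r) = -(sg p (G r) - tg p (G r)) from (neg_sub _ _).symm]
      exact dvd_neg.mpr h2
    obtain ⟨u, hu⟩ := h1
    obtain ⟨D', hz', hdvd'⟩ := ih u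
    obtain ⟨w, hw⟩ := hdvd'
    refine ⟨fun r => G r + (p : A) * D' r, ?_, ⟨w, ?_⟩⟩
    · intro r hr
      rw [hG]
      simp [Nat.not_lt.mpr hr, hz' r hr]
    · rw [Th_add, Th_pmul]
      have : g - (Th p G + (p:A) * Th p D') = (g - Th p G) - (p:A) * Th p D' := by ring
      rw [this, hu, ← mul_sub, hw, pow_succ]
      ring

lemma inj : ∀ (a : ℕ) (z : ℕ → A), (p : A) ^ a ∣ Th p z → ∀ r, r < p → (p : A) ^ a ∣ z r := by
  intro a
  induction a with
  | zero => intro z _ r _; rw [pow_zero]; exact one_dvd _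
  | succ a ih =>
    intro z hz r hr
    obtain ⟨v, hv⟩ := hz
    have key : ∑ r' ∈ Finset.range p, X ^ r' * tg p (z r')
        = Th p z - ∑ r' ∈ Finset.range p, X ^ r' * (sg p (z r') - tg p (z r')) := by
      rw [Th, ← Finset.sum_sub_distrib]
      exact Finset.sum_congr rfl fun r' _ => by ring
    have hps : (p : A) ∣ ∑ r' ∈ Finset.range p, X ^ r' * (sg p (z r') - tg p (z r')) :=
      Finset.dvd_sum fun r' _ => ((sg_sub_tg p (z r')).mul_left _)
    obtain ⟨w1, hw1⟩ := hps
    have hy : ∑ r' ∈ Finset.range p, X ^ r' * tg p (z r')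
        = (p : A) * ((p : A) ^ a * v - w1) := by
      rw [key, hv, hw1, pow_succ]; ring
    have hdig : ∀ r', r' < p → (p : A) ∣ z r' := by
      intro r' hr'
      rw [pA_eq, C_dvd_iff]
      intro t
      have hcg := congrArg (coeff (p * t + r')) hy
      rw [coeff_sum_tg] at hcg
      have e1 : (p * t + r') % p = r' := by
        rw [Nat.mul_add_mod, Nat.mod_eq_of_lt hr']
      have e2 : (p * t + r') / p = t := by
        rw [Nat.mul_add_div (hp0 p), Nat.div_eq_of_lt hr', add_zero]
      rw [e1, e2] at hcg
      rw [hcg, pA_eq, coeff_C_mul]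
      exact Dvd.intro _ rfl
    have hzden : ∀ r', ∃ w, (r' < p → z r' = (p : A) * w) := by
      intro r'
      by_cases h : r' < p
      · obtain ⟨w, hw⟩ := hdig r' h; exact ⟨w, fun _ => hw⟩
      · exact ⟨0, fun hc => absurd hc h⟩
    choose z' hz' using hzden
    have hTh : Th p z = (p : A) * Th p z' := by
      rw [Th, Th, Finset.mul_sum]
      apply Finset.sum_congr rfl
      intro r' hr'
      rw [hz' r' (Finset.mem_range.mp hr'), sg_nat_mul]
      ring
    have hcancel : Th p z' = (p : A) ^ a * v := by
      apply mul_left_cancel₀ (pA_ne p)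
      rw [← hTh, hv, pow_succ]; ring
    have := ih z' ⟨v, hcancel⟩ r hr
    obtain ⟨w, hw⟩ := this
    exact ⟨w, by rw [hz' r hr, hw, pow_succ]; ring⟩

lemma transfer (E : ℕ → A) (hzE : ∀ r, p ≤ r → E r = 0) :
    Th p (fun r => (p.choose (r + 1) : A) * E 0 + X * E (r + 1)) = QQ p * Th p E := by
  have expand : Th p (fun r => (p.choose (r + 1) : A) * E 0 + X * E (r + 1))
      = QQ p * sg p (E 0)
        + phiX p * ∑ r ∈ Finset.range p, X ^ r * sg p (E (r + 1)) := by
    rw [Th, QQ, Finset.sum_mul, Finset.mul_sum, ← Finset.sum_add_distrib]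
    apply Finset.sum_congr rfl
    intro r _
    rw [sg_add, sg_nat_mul, sg_X_mul]
    ring
  have hS : X * ∑ r ∈ Finset.range p, X ^ r * sg p (E (r + 1)) = Th p E - sg p (E 0) := by
    rw [Finset.mul_sum]
    rw [Finset.sum_congr rfl fun r (_ : r ∈ Finset.range p) =>
      show X * (X ^ r * sg p (E (r + 1))) = X ^ (r + 1) * sg p (E (r + 1)) by
        rw [pow_succ]; ring]
    have e2 := Finset.sum_range_succ' (fun s => X ^ s * sg p (E s)) p
    have e3 := Finset.sum_range_succ (fun s => X ^ s * sg p (E s)) p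
    simp only [hzE p le_rfl, sg_zero, mul_zero, add_zero, pow_zero, one_mul] at e2 e3
    rw [Th, ← e3, e2]
    ring
  rw [expand, ← X_mul_QQ,
    show X * QQ p * (∑ r ∈ Finset.range p, X ^ r * sg p (E (r + 1)))
      = QQ p * (X * ∑ r ∈ Finset.range p, X ^ r * sg p (E (r + 1))) from by ring,
    hS]
  ring

def VV (N : ℤ) (g : A) : Prop :=
  ∀ j e : ℕ, ((p : ℤ) - 1) * e + (p : ℤ) * j < N → (p : ℤ_[p]) ^ (e + 1) ∣ coeff j g

lemma hp1 : (1 : ℤ) ≤ (p : ℤ) - 1 := by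
  have := hp2 p; omega

lemma VV_of_nonpos {N : ℤ} (hN : N ≤ 0) (g : A) : VV p N g := by
  intro j e h
  exfalso
  have h1 : (0 : ℤ) ≤ ((p : ℤ) - 1) * e :=
    mul_nonneg (by have := hp1 p; omega) (by positivity)
  have h2 : (0 : ℤ) ≤ (p : ℤ) * j := by positivity
  omega

lemma VV_zero (N : ℤ) : VV p N 0 := by
  intro j e _; simp

lemma VV_mono {N' N : ℤ} (h : N' ≤ N) {g : A} : VV p N g → VV p N' g :=
  fun hg j e hj => hg j e (lt_of_lt_of_le hj h)

lemma VV_add {N : ℤ} {g h : A} : VV p N g → VV p N h → VV p N (g + h) := by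
  intro hg hh j e hj
  rw [map_add]
  exact dvd_add (hg j e hj) (hh j e hj)

lemma VV_mul_left {N : ℤ} (h : A) {g : A} (hg : VV p N g) : VV p N (h * g) := by
  intro j e hj
  rw [coeff_mul]
  apply Finset.dvd_sum
  intro q hq
  have hq2 : q.2 ≤ j := Finset.HasAntidiagonal.antidiagonal.snd_le hq
  refine Dvd.dvd.mul_left (hg q.2 e ?_) _
  have hc : ((q.2 : ℤ)) ≤ (j : ℤ) := by exact_mod_cast hq2
  have hm : (p : ℤ) * q.2 ≤ (p : ℤ) * j :=
    mul_le_mul_of_nonneg_left hc (by positivity)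
  linarith

lemma VV_p_mul {N : ℤ} {g : A} (hg : VV p N g) : VV p (N + ((p : ℤ) - 1)) ((p : A) * g) := by
  intro j e hj
  rw [pA_eq, coeff_C_mul]
  cases e with
  | zero => exact ⟨coeff j g, by rw [pow_succ, pow_zero, one_mul]⟩
  | succ e' =>
    have he : ((p : ℤ) - 1) * e' + (p : ℤ) * j < N := by push_cast at hj ⊢; linarith
    have := hg j e' he
    rw [show e' + 1 + 1 = (e' + 1) + 1 from rfl, pow_succ']
    exact mul_dvd_mul_left _ this

lemma VV_X_mul {N : ℤ} {g : A} (hg : VV p N g) : VV p (N + (p : ℤ)) (X * g) := by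
  intro j e hj
  cases j with
  | zero =>
    have : coeff 0 (X * g) = 0 := by
      rw [coeff_zero_eq_constantCoeff]; simp
    rw [this]; exact dvd_zero _
  | succ j' =>
    rw [coeff_succ_X_mul]
    apply hg j' e
    push_cast at hj ⊢
    linarith

lemma VV_pow_dvd (a : ℕ) {g : A} (hdvd : (p : A) ^ a ∣ g) :
    VV p ((a : ℤ) * ((p : ℤ) - 1)) g := by
  intro j e hj
  have hcoeff : (p : ℤ_[p]) ^ a ∣ coeff j g := by
    have : C ((p : ℤ_[p]) ^ a) ∣ g := by
      rw [map_pow, ← pA_eq]; exact hdvd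
    exact C_dvd_iff.mp this j
  refine dvd_trans (pow_dvd_pow _ ?_) hcoeff
  by_contra hcon
  push_neg at hcon
  have hea : (a : ℤ) ≤ (e : ℤ) := by exact_mod_cast Nat.le_of_lt_succ hcon
  have h1 : (0 : ℤ) ≤ (p : ℤ) * j := by positivity
  have hp1' := hp1 p
  nlinarith

lemma VV_eq {N : ℤ} {g h : A} (e : g = h) (hg : VV p N g) : VV p N h := e ▸ hg

lemma master : ∀ (a n : ℕ) (g : A) (D : ℕ → A), (∀ r, p ≤ r → D r = 0) →
    (p : A) ^ a ∣ (Th p D - QQ p ^ n * g) →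
    ∀ r, r < p → VV p ((min n a : ℕ) * ((p : ℤ) - 1) - r) (D r) := by
  intro a
  induction a with
  | zero =>
    intro n g D _ _ r _
    apply VV_of_nonpos
    have : ((min n 0 : ℕ) : ℤ) = 0 := by simp
    rw [this]
    have : (0 : ℤ) ≤ (r : ℤ) := by positivity
    linarith
  | succ a ih =>
    intro n g D hzD hdvd r hr
    cases n with
    | zero =>
      apply VV_of_nonpos
      have : ((min 0 (a + 1) : ℕ) : ℤ) = 0 := by simp
      rw [this]
      have : (0 : ℤ) ≤ (r : ℤ) := by positivity
      linarith
    | succ m =>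
      obtain ⟨E, hzE, hE⟩ := surj p (a + 1) (QQ p ^ m * g)
      have hThTE : Th p (fun r => (p.choose (r + 1) : A) * E 0 + X * E (r + 1))
          = QQ p * Th p E := transfer p E hzE
      have hdiff : (p : A) ^ (a + 1) ∣ Th p (fun r' => D r'
          - ((p.choose (r' + 1) : A) * E 0 + X * E (r' + 1))) := by
        have hT : Th p (fun r' => D r'
              - ((p.choose (r' + 1) : A) * E 0 + X * E (r' + 1)))
            = Th p D - Th p (fun r' => (p.choose (r' + 1) : A) * E 0 + X * E (r' + 1)) := by
          rw [Th, Th, Th, ← Finset.sum_sub_distrib]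
          exact Finset.sum_congr rfl fun r' _ => by rw [sg_sub]; ring
        rw [hT, hThTE]
        have split : Th p D - QQ p * Th p E
            = (Th p D - QQ p ^ (m + 1) * g) + QQ p * (QQ p ^ m * g - Th p E) := by
          rw [pow_succ]; ring
        rw [split]
        exact dvd_add hdvd (hE.mul_left _)
      have hDr := inj p (a + 1) _ hdiff r hr
      have hIH : ∀ r', r' < p → VV p ((min m a : ℕ) * ((p : ℤ) - 1) - r') (E r') := by
        apply ih m g E hzE
        obtain ⟨c, hc⟩ := dvd_trans (pow_dvd_pow ((p : A)) (Nat.le_succ a)) hE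
        refine ⟨-c, ?_⟩
        have : Th p E - QQ p ^ m * g = -(QQ p ^ m * g - Th p E) := by ring
        rw [this, hc]; ring
      have hmin : ((min (m + 1) (a + 1) : ℕ) : ℤ) = ((min m a : ℕ) : ℤ) + 1 := by
        have : min (m + 1) (a + 1) = min m a + 1 := by omega
        rw [this]; push_cast; ring
      set μZ : ℤ := ((min m a : ℕ) : ℤ) with hμ
      rw [hmin]
      have hgoal_eq : D r = (p.choose (r + 1) : A) * E 0
          + (X * E (r + 1)
            + (D r - ((p.choose (r + 1) : A) * E 0 + X * E (r + 1)))) := by ring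
      apply VV_eq p hgoal_eq.symm
      have hμa : μZ ≤ (a : ℤ) := by
        rw [hμ]; exact_mod_cast Nat.min_le_right m a
      have hμ0 : 0 ≤ μZ := by rw [hμ]; positivity
      have hr' : (r : ℤ) ≤ (p : ℤ) - 1 := by
        have : (r : ℤ) < (p : ℤ) := by exact_mod_cast hr
        omega
      have hr0 : (0 : ℤ) ≤ (r : ℤ) := by positivity
      have hp1' := hp1 p
      apply VV_add
      · -- first term
        rcases Nat.lt_or_ge (r + 1) p with h1 | h1
        · have hdvd1 : p ∣ p.choose (r + 1) := hp.out.dvd_choose_self (by omega) h1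
          obtain ⟨k, hk⟩ := hdvd1
          have heq : ((p.choose (r + 1) : ℕ) : A) * E 0 = (p : A) * ((k : A) * E 0) := by
            rw [hk]; push_cast; ring
          apply VV_eq p heq.symm
          have base : VV p (μZ * ((p : ℤ) - 1)) ((k : A) * E 0) := by
            apply VV_mul_left
            have := hIH 0 (hp0 p)
            apply VV_mono p (le_of_eq ?_) this
            rw [hμ]; push_cast; ring
          have := VV_p_mul p base
          apply VV_mono p ?_ this
          nlinarith
        · have hrp : r + 1 = p := by omega
          have heq : ((p.choose (r + 1) : ℕ) : A) * E 0 = E 0 := by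
            rw [hrp, Nat.choose_self]; push_cast; ring
          apply VV_eq p heq.symm
          have := hIH 0 (hp0 p)
          apply VV_mono p ?_ this
          rw [hμ]
          push_cast
          nlinarith
      · apply VV_add
        · -- X * E (r+1)
          rcases Nat.lt_or_ge (r + 1) p with h1 | h1
          · have := VV_X_mul p (hIH (r + 1) h1)
            apply VV_mono p ?_ this
            push_cast
            linarith
          · have hz : E (r + 1) = 0 := hzE _ h1
            rw [hz, mul_zero]
            exact VV_zero p _
        · -- error term
          have := VV_pow_dvd p (a + 1) hDr
          apply VV_mono p ?_ this
          push_cast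
          nlinarith

lemma VV_sum {N : ℤ} {ι : Type*} (s : Finset ι) (F : ι → A)
    (h : ∀ i ∈ s, VV p N (F i)) : VV p N (∑ i ∈ s, F i) := by
  classical
  induction s using Finset.induction with
  | empty => simpa using VV_zero p N
  | @insert i s hi ih =>
    rw [Finset.sum_insert hi]
    exact VV_add p (h i (Finset.mem_insert_self i s))
      (ih fun j hj => h j (Finset.mem_insert_of_mem hj))

lemma VV_subset_span (n : ℕ) (g : A)
    (hg : VV p ((n : ℤ) * ((p : ℤ) - 1) - ((p : ℤ) - 1)) g) :
    g ∈ Ideal.span ((fun j : ℕ => X ^ j *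
        (p : A) ^ ((((n : ℤ) * ((p : ℤ) - 1) - j * p - 1) /
          ((p : ℤ) - 1)).toNat)) '' (Set.Iic (n * (p - 1) / p))) := by
  set J : ℕ := n * (p - 1) / p with hJ
  set Ej : ℕ → ℕ := fun j => ((((n : ℤ) * ((p : ℤ) - 1) - j * p - 1) /
    ((p : ℤ) - 1)).toNat) with hEj
  have hp1' := hp1 p
  -- decomposition
  have hdec : g = (∑ j ∈ Finset.range J, C (coeff j g) * X ^ j)
      + X ^ J * (mk fun k => coeff (J + k) g) := by
    ext k
    rw [map_add, map_sum, coeff_X_pow_mul'']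
    have hterm : ∀ j ∈ Finset.range J,
        coeff k (C (coeff j g) * X ^ j)
          = if k = j then coeff j g else 0 := by
      intro j _
      rw [coeff_C_mul, coeff_X_pow]
      split_ifs <;> simp
    rw [Finset.sum_congr rfl hterm]
    by_cases hk : k < J
    · rw [Finset.sum_eq_single k]
      · rw [if_pos rfl, if_neg (by omega)]
        ring
      · intro j _ hne; rw [if_neg (fun h => hne h.symm)]
      · intro hnk; exact absurd (Finset.mem_range.mpr hk) hnk
    · rw [Finset.sum_eq_zero (fun j hj => by
        rw [if_neg]; intro h; subst h; exact hk (Finset.mem_range.mp hj))]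
      rw [if_pos (by omega), coeff_mk]
      rw [show J + (k - J) = k by omega, zero_add]
  -- coefficient divisibility for j such that Ej j > 0
  have hcoeff : ∀ j : ℕ, (p : ℤ_[p]) ^ (Ej j) ∣ coeff j g := by
    intro j
    rcases Nat.eq_zero_or_pos (Ej j) with h0 | hpos
    · rw [h0, pow_zero]; exact one_dvd _
    · set q : ℤ := ((n : ℤ) * ((p : ℤ) - 1) - j * p - 1) / ((p : ℤ) - 1) with hq
      have hq0 : 0 ≤ q := by
        by_contra hcon
        push_neg at hcon
        have : Ej j = 0 := by
          rw [hEj]; simp only []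
          exact Int.toNat_of_nonpos (le_of_lt hcon)
        omega
      have hqval : (Ej j : ℤ) = q := by
        rw [hEj]; exact Int.toNat_of_nonneg hq0
      obtain ⟨e, he⟩ : ∃ e : ℕ, Ej j = e + 1 := ⟨Ej j - 1, by omega⟩
      rw [he]
      apply hg j e
      have hqle : ((p : ℤ) - 1) * q ≤ (n : ℤ) * ((p : ℤ) - 1) - j * p - 1 := by
        rw [hq, mul_comm]
        exact Int.ediv_mul_le _ (by omega)
      have heq : (e : ℤ) = q - 1 := by
        have : (Ej j : ℤ) = (e : ℤ) + 1 := by rw [he]; push_cast; ring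
        omega
      rw [heq]
      have hj0 : (0 : ℤ) ≤ (j : ℤ) := by positivity
      nlinarith
  -- tail exponent is zero
  have hEJ : Ej J = 0 := by
    have hd := Nat.div_add_mod (n * (p - 1)) p
    have hm := Nat.mod_lt (n * (p - 1)) (hp0 p)
    have hcast : ((n * (p - 1) : ℕ) : ℤ) = (n : ℤ) * ((p : ℤ) - 1) := by
      have h2 := hp2 p
      push_cast [Nat.cast_sub (by omega : 1 ≤ p)]
      ring
    set R : ℤ := (((n * (p - 1)) % p : ℕ) : ℤ) with hR
    have hc1 : (p : ℤ) * J + R = (n : ℤ) * ((p : ℤ) - 1) := by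
      rw [hJ, hR, ← hcast]
      exact_mod_cast hd
    have hc2 : R < (p : ℤ) := by rw [hR]; exact_mod_cast hm
    have hnum : (n : ℤ) * ((p : ℤ) - 1) - J * p - 1 ≤ (p : ℤ) - 2 := by
      nlinarith [hc1, hc2]
    rw [hEj]
    apply Int.toNat_eq_zero.mpr
    calc ((n : ℤ) * ((p : ℤ) - 1) - J * p - 1) / ((p : ℤ) - 1)
        ≤ ((p : ℤ) - 2) / ((p : ℤ) - 1) := Int.ediv_le_ediv (by omega) hnum
      _ = 0 := Int.ediv_eq_zero_of_lt (by omega) (by omega)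
  -- assemble
  rw [hdec]
  apply Ideal.add_mem
  · apply Ideal.sum_mem
    intro j hj
    have hjJ : j ≤ J := le_of_lt (Finset.mem_range.mp hj)
    obtain ⟨c, hc⟩ := hcoeff j
    have hterm : C (coeff j g) * X ^ j
        = (X ^ j * (p : A) ^ (Ej j)) * C c := by
      rw [hc, map_mul, map_pow, pA_eq]
      ring
    rw [hterm]
    exact Ideal.mul_mem_right _ _ (Ideal.subset_span ⟨j, Set.mem_Iic.mpr hjJ, rfl⟩)
  · have hgen : (X : A) ^ J * (p : A) ^ (Ej J) = X ^ J := by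
      rw [hEJ, pow_zero, mul_one]
    have : (X : A) ^ J * (mk fun k => coeff (J + k) g)
        = (X ^ J * (p : A) ^ (Ej J)) * (mk fun k => coeff (J + k) g) := by
      rw [hgen]
    rw [this]
    exact Ideal.mul_mem_right _ _ (Ideal.subset_span ⟨J, Set.mem_Iic.mpr le_rfl, rfl⟩)

lemma sg_sum {ι : Type*} (s : Finset ι) (F : ι → A) :
    sg p (∑ i ∈ s, F i) = ∑ i ∈ s, sg p (F i) := subst'_sum _ _ _

end Main
end SEII



open SEII in
/-- **Sharp Estimate II** (Theorem 3.6): with `Q = ∑_{i=1}^{p} C(p,i) X^{i-1}`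
(so `X·Q = (1+X)^p - 1`), if `Q^n f = ∑_{i<p} (1+X)^i xᵢ((1+X)^p - 1)` in `ℤ_p[[X]]`,
then `x₀ = π^n ψ(π^{-n} f)` lies in the ideal generated by the elements
`X^j p^[(n(p-1)-jp-1)/(p-1)]` for `0 ≤ j ≤ [n(p-1)/p]`. -/
theorem sharp_estimate_II (p : ℕ) [hp : Fact p.Prime] (n : ℕ) (hn : 0 < n)
    (f : PowerSeries ℤ_[p]) (x : Fin p → PowerSeries ℤ_[p])
    (hx : (∑ i ∈ Finset.range p, (p.choose (i + 1) : PowerSeries ℤ_[p]) * X ^ i) ^ n * f =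
      ∑ i : Fin p, (1 + X) ^ (i : ℕ) * PowerSeries.subst' ((1 + X) ^ p - 1) (x i)) :
    x 0 ∈ Ideal.span ((fun j : ℕ => X ^ j *
        (p : PowerSeries ℤ_[p]) ^ ((((n : ℤ) * ((p : ℤ) - 1) - j * p - 1) /
          ((p : ℤ) - 1)).toNat)) ''
      (Set.Iic (n * (p - 1) / p))) := by
  classical
  set D : ℕ → PowerSeries ℤ_[p] :=
    fun r => ∑ i : Fin p, (((i : ℕ).choose r : ℕ) : PowerSeries ℤ_[p]) * x i with hD
  have hzD : ∀ r, p ≤ r → D r = 0 := by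
    intro r hr
    rw [hD]
    apply Finset.sum_eq_zero
    intro i _
    rw [Nat.choose_eq_zero_of_lt (lt_of_lt_of_le i.isLt hr)]
    simp
  have hThD : Th p D = ∑ i : Fin p, (1 + X) ^ (i : ℕ) * sg p (x i) := by
    rw [Th]
    have step1 : ∀ r ∈ Finset.range p, X ^ r * sg p (D r)
        = ∑ i : Fin p, (((i : ℕ).choose r : ℕ) : PowerSeries ℤ_[p]) * X ^ r * sg p (x i) := by
      intro r _
      rw [hD, sg_sum, Finset.mul_sum]
      apply Finset.sum_congr rfl
      intro i _
      rw [sg_nat_mul]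
      ring
    rw [Finset.sum_congr rfl step1, Finset.sum_comm]
    apply Finset.sum_congr rfl
    intro i _
    have hbin : ∑ r ∈ Finset.range p, (((i : ℕ).choose r : ℕ) : PowerSeries ℤ_[p]) * X ^ r
        = (1 + X) ^ (i : ℕ) := by
      rw [one_add_X_pow]
      apply (Finset.sum_subset ?_ ?_).symm
      · intro r hr
        rw [Finset.mem_range] at *
        have := i.isLt
        omega
      · intro r _ hr
        rw [Finset.mem_range, not_lt] at hr
        rw [Nat.choose_eq_zero_of_lt (by omega)]
        simp
    rw [← hbin, Finset.sum_mul]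
  have hzero : Th p D - QQ p ^ n * f = 0 := by
    rw [hThD, sub_eq_zero]
    exact hx.symm
  have hmain := master p n n f D hzD (by rw [hzero]; exact dvd_zero _)
  have hVD : ∀ r, r < p → VV p ((n : ℤ) * ((p : ℤ) - 1) - r) (D r) := by
    intro r hr
    have := hmain r hr
    rwa [min_self] at this
  have key : ∑ r ∈ Finset.range p, (-1 : PowerSeries ℤ_[p]) ^ r * D r = x 0 := by
    rw [Finset.sum_congr rfl (fun r (_ : r ∈ Finset.range p) => by
      rw [hD, Finset.mul_sum] :
      ∀ r ∈ Finset.range p, (-1 : PowerSeries ℤ_[p]) ^ r * D r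
        = ∑ i : Fin p, (-1 : PowerSeries ℤ_[p]) ^ r
            * ((((i : ℕ).choose r : ℕ) : PowerSeries ℤ_[p]) * x i))]
    rw [Finset.sum_comm]
    have inner : ∀ i : Fin p,
        ∑ r ∈ Finset.range p, (-1 : PowerSeries ℤ_[p]) ^ r
            * ((((i : ℕ).choose r : ℕ) : PowerSeries ℤ_[p]) * x i)
        = (if (i : ℕ) = 0 then 1 else 0) * x i := by
      intro i
      have assoc : ∀ r ∈ Finset.range p,
          (-1 : PowerSeries ℤ_[p]) ^ r * ((((i : ℕ).choose r : ℕ) : PowerSeries ℤ_[p]) * x i)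
          = ((-1 : PowerSeries ℤ_[p]) ^ r * (((i : ℕ).choose r : ℕ) : PowerSeries ℤ_[p])) * x i :=
        fun r _ => (mul_assoc _ _ _).symm
      rw [Finset.sum_congr rfl assoc, ← Finset.sum_mul]
      congr 1
      have htrunc : ∑ r ∈ Finset.range p, (-1 : PowerSeries ℤ_[p]) ^ r
            * (((i : ℕ).choose r : ℕ) : PowerSeries ℤ_[p])
          = ∑ r ∈ Finset.range ((i : ℕ) + 1), (-1 : PowerSeries ℤ_[p]) ^ r
            * (((i : ℕ).choose r : ℕ) : PowerSeries ℤ_[p]) := by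
        apply (Finset.sum_subset ?_ ?_).symm
        · intro r hr
          rw [Finset.mem_range] at *
          have := i.isLt
          omega
        · intro r _ hr
          rw [Finset.mem_range, not_lt] at hr
          rw [Nat.choose_eq_zero_of_lt (by omega)]
          simp
      rw [htrunc]
      have hz := Int.alternating_sum_range_choose (n := (i : ℕ))
      have hcast := congrArg (fun t : ℤ => (t : PowerSeries ℤ_[p])) hz
      push_cast at hcast
      rw [hcast]
    rw [Finset.sum_congr rfl (fun i _ => inner i)]
    rw [Finset.sum_eq_single 0]
    · simp
    · intro i _ hne
      rw [if_neg, zero_mul]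
      intro h
      exact hne (Fin.ext (by simpa using h))
    · intro h
      exact absurd (Finset.mem_univ _) h
  have hx0 : VV p ((n : ℤ) * ((p : ℤ) - 1) - ((p : ℤ) - 1)) (x 0) := by
    apply VV_eq p key
    apply VV_sum
    intro r hr
    apply VV_mul_left
    apply VV_mono p ?_ (hVD r (Finset.mem_range.mp hr))
    have h1 : (r : ℤ) ≤ (p : ℤ) - 1 := by
      have : (r : ℤ) < (p : ℤ) := by exact_mod_cast Finset.mem_range.mp hr
      omega
    omega
  exact VV_subset_span p n (x 0) hx0
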